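/- arXiv:math/0110118 — 4 statements merged into one kernel-verified Lean document; each statement's English description precedes it below -/
import Mathlib

section
/- For every measurable function f on ℝ² and every t > 0, the inclusions {f₂* > t} ⊆ {|f| > t}* ⊆ {f₂* ≥ t} hold. -/
open MeasureTheory Set ENNReal Filter

/-- Classical decreasing rearrangement of an `ℝ≥0∞`-valued function. -/
noncomputable def decRe {α : Type*} [MeasurableSpace α] (μ : Measure α)
    (g : α → ℝ≥0∞) (t : ℝ) : ℝ≥0∞ :=
  sInf {l : ℝ≥0∞ | μ {x | l < g x} ≤ ENNReal.ofReal t}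

/-- `φ_E(x)`: the measure of the `x`-section of `E`. -/
noncomputable def phiSec (E : Set (ℝ × ℝ)) (x : ℝ) : ℝ≥0∞ :=
  volume {y : ℝ | (x, y) ∈ E}

/-- The two-dimensional decreasing rearrangement `E*` of a set `E ⊆ ℝ²`. -/
def starSet (E : Set (ℝ × ℝ)) : Set (ℝ × ℝ) :=
  {p | 0 < p.1 ∧ 0 < p.2 ∧ ENNReal.ofReal p.2 < decRe volume (phiSec E) p.1}

/-- The two-dimensional decreasing rearrangement `f₂*` of a function (layer-cake formula). -/
noncomputable def rearr2 (f : ℝ × ℝ → ℝ) (x : ℝ × ℝ) : ℝ≥0∞ :=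
  ∫⁻ t in Set.Ioi (0 : ℝ), (starSet {p | t < |f p|}).indicator (fun _ => (1 : ℝ≥0∞)) x

/-- The open positive quadrant `ℝ₊²`. -/
def Quad : Set (ℝ × ℝ) := Set.Ioi 0 ×ˢ Set.Ioi 0

lemma decRe_mono {α : Type*} [MeasurableSpace α] (μ : Measure α)
    {g g' : α → ℝ≥0∞} (h : ∀ x, g x ≤ g' x) (t : ℝ) :
    decRe μ g t ≤ decRe μ g' t := by
  apply sInf_le_sInf
  intro l hl
  exact le_trans (measure_mono (fun x hx => lt_of_lt_of_le hx (h x))) hl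

lemma phiSec_mono {E F : Set (ℝ × ℝ)} (h : E ⊆ F) (x : ℝ) : phiSec E x ≤ phiSec F x :=
  measure_mono (fun y hy => h hy)

lemma starSet_mono {E F : Set (ℝ × ℝ)} (h : E ⊆ F) : starSet E ⊆ starSet F := by
  intro p hp
  simp only [starSet, mem_setOf_eq] at hp ⊢
  exact ⟨hp.1, hp.2.1, lt_of_lt_of_le hp.2.2 (decRe_mono volume (phiSec_mono h) p.1)⟩

theorem stmt5 (f : ℝ × ℝ → ℝ) (hf : Measurable f) (t : ℝ) (ht : 0 < t) :
    {x | ENNReal.ofReal t < rearr2 f x} ⊆ starSet {p | t < |f p|} ∧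
      starSet {p | t < |f p|} ⊆ {x | ENNReal.ofReal t ≤ rearr2 f x} := by
  constructor
  · intro x hx
    by_contra hxs
    apply absurd hx
    simp only [mem_setOf_eq, not_lt]
    calc rearr2 f x ≤ ∫⁻ s in Set.Ioi (0 : ℝ), (Set.Ioc 0 t).indicator (fun _ => (1 : ℝ≥0∞)) s := by
          apply setLIntegral_mono' measurableSet_Ioi
          intro s hs
          rcases le_or_gt s t with hst | hst
          · refine le_trans (Set.indicator_le_self _ _ x) ?_
            rw [Set.indicator_of_mem (Set.mem_Ioc.mpr ⟨hs, hst⟩)]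
          · have : x ∉ starSet {p | s < |f p|} := fun h =>
              hxs (starSet_mono (fun p hp => lt_trans hst hp) h)
            rw [Set.indicator_of_notMem this]
            exact zero_le'
      _ = ENNReal.ofReal t := by
          rw [lintegral_indicator measurableSet_Ioc _, Measure.restrict_restrict measurableSet_Ioc,
            setLIntegral_one]
          rw [Set.Ioc_inter_Ioi, Real.volume_Ioc]
          simp [le_refl]
  · intro x hx
    show ENNReal.ofReal t ≤ rearr2 f x
    calc ENNReal.ofReal t
        = ∫⁻ s in Set.Ioi (0 : ℝ), (Set.Ioo 0 t).indicator (fun _ => (1 : ℝ≥0∞)) s := by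
          rw [lintegral_indicator measurableSet_Ioo _, Measure.restrict_restrict measurableSet_Ioo,
            setLIntegral_one]
          rw [Set.inter_eq_left.mpr (Set.Ioo_subset_Ioi_self), Real.volume_Ioo, sub_zero]
      _ ≤ rearr2 f x := by
          apply setLIntegral_mono' measurableSet_Ioi
          intro s hs
          by_cases hst : s ∈ Set.Ioo (0:ℝ) t
          · rw [Set.indicator_of_mem hst]
            exact (Set.indicator_of_mem (starSet_mono (fun p hp => lt_trans hst.2 hp) hx)
              (fun _ => (1 : ℝ≥0∞))).ge
          · rw [Set.indicator_of_notMem hst]; exact zero_le'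
end

section
/- For measurable functions f, g on ℝ² and t > 0, χ_{{|f+g|>t}*}(x+y) ≤ χ_{{|f|>t/2}*}(x) + χ_{{|g|>t/2}*}(y) for all x, y ∈ ℝ₊² (addition of points coordinatewise). -/
open MeasureTheory Set ENNReal Filter

lemma decRe_mem {α : Type*} [MeasurableSpace α] (μ : Measure α) (g : α → ℝ≥0∞) (t : ℝ) :
    μ {x | decRe μ g t < g x} ≤ ENNReal.ofReal t := by
  set S := {l : ℝ≥0∞ | μ {x | l < g x} ≤ ENNReal.ofReal t} with hS
  have hne : S.Nonempty := ⟨⊤, by simp [hS]⟩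
  obtain ⟨u, hu_anti, hu_tendsto, hu_mem⟩ :=
    exists_seq_tendsto_sInf hne (OrderBot.bddBelow S)
  have hsub : {x | sInf S < g x} ⊆ ⋃ n, {x | u n < g x} := by
    intro z hz
    obtain ⟨n, hn⟩ := (hu_tendsto.eventually_lt_const hz).exists
    exact Set.mem_iUnion.2 ⟨n, hn⟩
  have hmono : Monotone fun n => {x | u n < g x} := by
    intro m n hmn z hz
    exact lt_of_le_of_lt (hu_anti hmn) hz
  have hU : μ (⋃ n, {x | u n < g x}) = ⨆ n, μ {x | u n < g x} :=
    hmono.directed_le.measure_iUnion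
  calc μ {x | decRe μ g t < g x} ≤ μ (⋃ n, {x | u n < g x}) := measure_mono hsub
    _ = ⨆ n, μ {x | u n < g x} := hU
    _ ≤ ENNReal.ofReal t := iSup_le fun n => hu_mem n

theorem stmt6 (f g : ℝ × ℝ → ℝ) (hf : Measurable f) (hg : Measurable g)
    (t : ℝ) (ht : 0 < t) (x y : ℝ × ℝ) (hx : x ∈ Quad) (hy : y ∈ Quad) :
    (starSet {p | t < |f p + g p|}).indicator (fun _ => (1 : ℝ≥0∞)) (x + y)
      ≤ (starSet {p | t / 2 < |f p|}).indicator (fun _ => (1 : ℝ≥0∞)) x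
        + (starSet {p | t / 2 < |g p|}).indicator (fun _ => (1 : ℝ≥0∞)) y := by
  classical
  set E : Set (ℝ × ℝ) := {p | t < |f p + g p|} with hE
  set A : Set (ℝ × ℝ) := {p | t / 2 < |f p|} with hA
  set B : Set (ℝ × ℝ) := {p | t / 2 < |g p|} with hB
  by_cases hmem : (x + y) ∈ starSet E
  · -- show the disjunction x ∈ A* ∨ y ∈ B*
    have hEAB : E ⊆ A ∪ B := by
      intro p hp
      by_contra hc
      simp only [hA, hB, Set.mem_union, Set.mem_setOf_eq, not_or, not_lt] at hc
      have : |f p + g p| ≤ t := by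
        calc |f p + g p| ≤ |f p| + |g p| := abs_add_le _ _
          _ ≤ t := by linarith [hc.1, hc.2]
      exact absurd hp (by simpa [hE] using this.not_gt)
    have hphi : ∀ s, phiSec E s ≤ phiSec A s + phiSec B s := by
      intro s
      have hsub : {z : ℝ | (s, z) ∈ E} ⊆ {z : ℝ | (s, z) ∈ A} ∪ {z : ℝ | (s, z) ∈ B} := by
        intro z hz
        rcases hEAB hz with h | h
        · exact Or.inl h
        · exact Or.inr h
      calc phiSec E s ≤ volume ({z : ℝ | (s, z) ∈ A} ∪ {z : ℝ | (s, z) ∈ B}) :=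
            measure_mono hsub
        _ ≤ phiSec A s + phiSec B s := measure_union_le _ _
    obtain ⟨hp1, hp2, hp3⟩ := hmem
    have hx1 : (0 : ℝ) < x.1 := hx.1
    have hx2 : (0 : ℝ) < x.2 := hx.2
    have hy1 : (0 : ℝ) < y.1 := hy.1
    have hy2 : (0 : ℝ) < y.2 := hy.2
    have hdisj : x ∈ starSet A ∨ y ∈ starSet B := by
      by_contra hc
      push_neg at hc
      obtain ⟨hcx, hcy⟩ := hc
      have hLA : decRe volume (phiSec A) x.1 ≤ ENNReal.ofReal x.2 := by
        by_contra h
        exact hcx ⟨hx1, hx2, not_le.1 h⟩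
      have hLB : decRe volume (phiSec B) y.1 ≤ ENNReal.ofReal y.2 := by
        by_contra h
        exact hcy ⟨hy1, hy2, not_le.1 h⟩
      set L1 := decRe volume (phiSec A) x.1 with hL1
      set L2 := decRe volume (phiSec B) y.1 with hL2
      have hsub : {s : ℝ | L1 + L2 < phiSec E s}
          ⊆ {s | L1 < phiSec A s} ∪ {s | L2 < phiSec B s} := by
        intro s hs
        by_contra h
        simp only [Set.mem_union, Set.mem_setOf_eq, not_or, not_lt] at h
        exact absurd (le_trans (hphi s) (add_le_add h.1 h.2)) (not_le.2 hs)
      have hmeas : volume {s : ℝ | L1 + L2 < phiSec E s}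
          ≤ ENNReal.ofReal ((x + y).1) := by
        calc volume {s : ℝ | L1 + L2 < phiSec E s}
            ≤ volume ({s | L1 < phiSec A s} ∪ {s | L2 < phiSec B s}) := measure_mono hsub
          _ ≤ volume {s | L1 < phiSec A s} + volume {s | L2 < phiSec B s} :=
              measure_union_le _ _
          _ ≤ ENNReal.ofReal x.1 + ENNReal.ofReal y.1 :=
              add_le_add (decRe_mem volume (phiSec A) x.1) (decRe_mem volume (phiSec B) y.1)
          _ = ENNReal.ofReal ((x + y).1) := by
              rw [Prod.fst_add, ENNReal.ofReal_add hx1.le hy1.le]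
      have hle : decRe volume (phiSec E) ((x + y).1) ≤ L1 + L2 := sInf_le hmeas
      have : ENNReal.ofReal ((x + y).2) < ENNReal.ofReal ((x + y).2) := by
        calc ENNReal.ofReal ((x + y).2) < decRe volume (phiSec E) ((x + y).1) := hp3
          _ ≤ L1 + L2 := hle
          _ ≤ ENNReal.ofReal x.2 + ENNReal.ofReal y.2 := add_le_add hLA hLB
          _ = ENNReal.ofReal ((x + y).2) := by
              rw [Prod.snd_add, ENNReal.ofReal_add hx2.le hy2.le]
      exact lt_irrefl _ this
    rcases hdisj with h | h
    · calc (starSet E).indicator (fun _ => (1 : ℝ≥0∞)) (x + y) ≤ 1 := by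
            by_cases hm : x + y ∈ starSet E <;> simp [hm]
        _ = (starSet A).indicator (fun _ => (1 : ℝ≥0∞)) x := by
            rw [Set.indicator_of_mem h]
        _ ≤ _ := le_self_add
    · calc (starSet E).indicator (fun _ => (1 : ℝ≥0∞)) (x + y) ≤ 1 := by
            by_cases hm : x + y ∈ starSet E <;> simp [hm]
        _ = (starSet B).indicator (fun _ => (1 : ℝ≥0∞)) y := by
            rw [Set.indicator_of_mem h]
        _ ≤ _ := le_add_self
  · rw [Set.indicator_of_notMem hmem]
    exact zero_le
end

section
/- If g is a nonnegative simple measurable function on ℝ² and E ⊆ ℝ² is measurable, then ∫_E g(x) dx ≤ ∫_{E*} g₂*(x) dx. -/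
open MeasureTheory Set ENNReal Filter

/- ### Auxiliary lemmas -/

lemma decRe_antitone {α : Type*} [MeasurableSpace α] (μ : Measure α) (f : α → ℝ≥0∞) :
    Antitone (decRe μ f) := fun _ _ hst =>
  sInf_le_sInf fun _ hl => le_trans hl (ENNReal.ofReal_le_ofReal hst)

lemma measurable_decRe {α : Type*} [MeasurableSpace α] (μ : Measure α) (f : α → ℝ≥0∞) :
    Measurable (decRe μ f) := (decRe_antitone μ f).measurable

lemma vol_setOf_lt (m : ℝ≥0∞) : volume {s : ℝ | 0 < s ∧ ENNReal.ofReal s < m} = m := by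
  by_cases hm : m = ∞
  · have : {s : ℝ | 0 < s ∧ ENNReal.ofReal s < m} = Ioi (0:ℝ) := by
      ext s; simp [hm, ENNReal.ofReal_lt_top]
    rw [this, Real.volume_Ioi]; exact hm.symm
  · have : {s : ℝ | 0 < s ∧ ENNReal.ofReal s < m} = Ioo (0:ℝ) m.toReal := by
      ext s
      simp only [mem_setOf_eq, mem_Ioo, and_congr_right_iff]
      intro hs
      exact ENNReal.ofReal_lt_iff_lt_toReal hs.le hm
    rw [this, Real.volume_Ioo, sub_zero, ENNReal.ofReal_toReal hm]

lemma decRe_le_iff {α : Type*} [MeasurableSpace α] (μ : Measure α) (f : α → ℝ≥0∞)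
    {c : ℝ≥0∞} (hc : c ≠ ∞) (t : ℝ) :
    decRe μ f t ≤ c ↔ μ {x | c < f x} ≤ ENNReal.ofReal t := by
  constructor
  · intro h
    have hU : {x | c < f x} = ⋃ n : ℕ, {x | c + (n : ℝ≥0∞)⁻¹ < f x} := by
      ext x
      simp only [mem_setOf_eq, mem_iUnion]
      constructor
      · intro hx
        obtain ⟨m, hm1, hm2⟩ := exists_between hx
        have hsub : m - c ≠ 0 := by
          simpa [pos_iff_ne_zero] using tsub_pos_of_lt hm1
        obtain ⟨n, hn⟩ := ENNReal.exists_inv_nat_lt hsub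
        refine ⟨n, lt_of_lt_of_le ?_ hm2.le⟩
        calc c + (n : ℝ≥0∞)⁻¹ < c + (m - c) := ENNReal.add_lt_add_left hc hn
          _ = m := by rw [add_comm, tsub_add_cancel_of_le hm1.le]
      · rintro ⟨n, hn⟩
        exact lt_of_le_of_lt (le_add_right le_rfl) hn
    have hmono : Monotone fun n : ℕ => {x | c + (n : ℝ≥0∞)⁻¹ < f x} := by
      intro n n' hnn' x hx
      show c + (n' : ℝ≥0∞)⁻¹ < f x
      refine lt_of_le_of_lt (add_le_add le_rfl ?_) (show c + (n : ℝ≥0∞)⁻¹ < f x from hx)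
      exact ENNReal.inv_le_inv.mpr (by exact_mod_cast hnn')
    rw [hU, Directed.measure_iUnion hmono.directed_le]
    refine iSup_le fun n => ?_
    have hlt : decRe μ f t < c + (n : ℝ≥0∞)⁻¹ :=
      lt_of_le_of_lt h (ENNReal.lt_add_right hc (by simp))
    obtain ⟨m, hm, hmlt⟩ := sInf_lt_iff.mp hlt
    exact le_trans (measure_mono fun x hx => lt_trans hmlt hx) hm
  · intro h
    exact sInf_le h

lemma lt_decRe_iff {α : Type*} [MeasurableSpace α] (μ : Measure α) (f : α → ℝ≥0∞)
    {c : ℝ≥0∞} (hc : c ≠ ∞) (t : ℝ) :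
    c < decRe μ f t ↔ ENNReal.ofReal t < μ {x | c < f x} := by
  rw [← not_le, ← not_le, decRe_le_iff μ f hc]

/-- Layer-cake formula for `ℝ≥0∞`-valued functions. -/
lemma layercake {α : Type*} [MeasurableSpace α] (μ : Measure α) [SFinite μ]
    (f : α → ℝ≥0∞) (hf : Measurable f) :
    ∫⁻ x, f x ∂μ = ∫⁻ t in Set.Ioi (0:ℝ), μ {x | ENNReal.ofReal t < f x} := by
  have key : ∀ x, f x =
      ∫⁻ t, ({t : ℝ | 0 < t ∧ ENNReal.ofReal t < f x}).indicator 1 t := by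
    intro x
    rw [lintegral_indicator_one, vol_setOf_lt]
    exact ((measurableSet_Ioi : MeasurableSet (Ioi (0:ℝ)))).inter
      (measurable_ofReal measurableSet_Iio)
  calc ∫⁻ x, f x ∂μ
      = ∫⁻ x, ∫⁻ t, ({t : ℝ | 0 < t ∧ ENNReal.ofReal t < f x}).indicator 1 t ∂(volume) ∂μ :=
        lintegral_congr key
    _ = ∫⁻ t, ∫⁻ x, ({t : ℝ | 0 < t ∧ ENNReal.ofReal t < f x}).indicator 1 t ∂μ ∂(volume) := by
        apply lintegral_lintegral_swap
        have h1 : Measurable fun p : α × ℝ => ENNReal.ofReal p.2 :=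
          ENNReal.measurable_ofReal.comp measurable_snd
        have h2 : Measurable fun p : α × ℝ => f p.1 := hf.comp measurable_fst
        have h3 : MeasurableSet {p : α × ℝ | 0 < p.2} := measurable_snd measurableSet_Ioi
        have h4 : MeasurableSet {p : α × ℝ | ENNReal.ofReal p.2 < f p.1} :=
          measurableSet_lt h1 h2
        have hset : MeasurableSet {p : α × ℝ | 0 < p.2 ∧ ENNReal.ofReal p.2 < f p.1} :=
          h3.inter h4
        have heq : (Function.uncurry fun x t =>
            ({t : ℝ | 0 < t ∧ ENNReal.ofReal t < f x}).indicator 1 t)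
            = {p : α × ℝ | 0 < p.2 ∧ ENNReal.ofReal p.2 < f p.1}.indicator
              (1 : α × ℝ → ℝ≥0∞) := by
          funext p
          simp [Function.uncurry, Set.indicator_apply]
        have : Measurable ({p : α × ℝ | 0 < p.2 ∧ ENNReal.ofReal p.2 < f p.1}.indicator
            (1 : α × ℝ → ℝ≥0∞)) := Measurable.indicator measurable_const hset
        exact (heq ▸ this).aemeasurable
    _ = ∫⁻ t in Set.Ioi (0:ℝ), μ {x | ENNReal.ofReal t < f x} := by
        rw [← lintegral_indicator measurableSet_Ioi]
        apply lintegral_congr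
        intro t
        by_cases ht : (0:ℝ) < t
        · have heq2 : ∀ x : α, ({t : ℝ | 0 < t ∧ ENNReal.ofReal t < f x}).indicator 1 t
              = ({x | ENNReal.ofReal t < f x}).indicator (1 : α → ℝ≥0∞) x := by
            intro x; simp [Set.indicator_apply, ht]
          rw [lintegral_congr heq2, Set.indicator_of_mem (show t ∈ Ioi (0:ℝ) from ht)]
          exact lintegral_indicator_one (hf measurableSet_Ioi)
        · simp only [Set.indicator_of_notMem (show t ∉ Set.Ioi (0:ℝ) from ht)]
          have heq3 : ∀ x : α, ({t : ℝ | 0 < t ∧ ENNReal.ofReal t < f x}).indicator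
              (1 : ℝ → ℝ≥0∞) t = 0 := by
            intro x; simp [Set.indicator_apply, ht]
          rw [lintegral_congr heq3, lintegral_zero]

lemma measurableSet_starSet (A : Set (ℝ × ℝ)) : MeasurableSet (starSet A) := by
  have h1 : MeasurableSet {p : ℝ × ℝ | 0 < p.1} := measurable_fst measurableSet_Ioi
  have h2 : MeasurableSet {p : ℝ × ℝ | 0 < p.2} := measurable_snd measurableSet_Ioi
  have h3 : MeasurableSet {p : ℝ × ℝ | ENNReal.ofReal p.2 < decRe volume (phiSec A) p.1} :=
    measurableSet_lt (ENNReal.measurable_ofReal.comp measurable_snd)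
      ((measurable_decRe _ _).comp measurable_fst)
  exact h1.inter (h2.inter h3)

/-- The key geometric inequality: `|A ∩ B| ≤ |A* ∩ B*|`. -/
lemma setInt (A B : Set (ℝ × ℝ)) (hA : MeasurableSet A) (hB : MeasurableSet B) :
    volume (A ∩ B) ≤ volume (starSet A ∩ starSet B) := by
  have hφA : Measurable (phiSec A) := measurable_measure_prodMk_left hA
  have hφB : Measurable (phiSec B) := measurable_measure_prodMk_left hB
  set FA := decRe volume (phiSec A) with hFA
  set FB := decRe volume (phiSec B) with hFB
  have rhs : volume (starSet A ∩ starSet B)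
      = ∫⁻ t in Set.Ioi (0:ℝ),
          min (volume {x | ENNReal.ofReal t < phiSec A x})
              (volume {x | ENNReal.ofReal t < phiSec B x}) := by
    rw [show (volume : Measure (ℝ × ℝ)) = (volume : Measure ℝ).prod volume from
      MeasureTheory.Measure.volume_eq_prod ℝ ℝ, Measure.prod_apply ((measurableSet_starSet A).inter
      (measurableSet_starSet B))]
    have sec : ∀ x : ℝ, volume (Prod.mk x ⁻¹' (starSet A ∩ starSet B))
        = (Ioi (0:ℝ)).indicator (fun x => min (FA x) (FB x)) x := by
      intro x
      by_cases hx : 0 < x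
      · have : Prod.mk x ⁻¹' (starSet A ∩ starSet B)
            = {y : ℝ | 0 < y ∧ ENNReal.ofReal y < min (FA x) (FB x)} := by
          ext y
          simp only [mem_preimage, mem_inter_iff, mem_setOf_eq, starSet, lt_min_iff]
          constructor
          · rintro ⟨⟨_, hy, h1⟩, ⟨_, _, h2⟩⟩; exact ⟨hy, h1, h2⟩
          · rintro ⟨hy, h1, h2⟩; exact ⟨⟨hx, hy, h1⟩, ⟨hx, hy, h2⟩⟩
        rw [this, vol_setOf_lt, Set.indicator_of_mem (show x ∈ Ioi (0:ℝ) from hx)]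
      · have : Prod.mk x ⁻¹' (starSet A ∩ starSet B) = (∅ : Set ℝ) := by
          ext y
          simp only [mem_preimage, mem_inter_iff, mem_empty_iff_false, iff_false, starSet,
            mem_setOf_eq]
          rintro ⟨⟨h, _, _⟩, _⟩; exact hx h
        rw [this, measure_empty, Set.indicator_of_notMem (show x ∉ Ioi (0:ℝ) from hx)]
    rw [lintegral_congr sec, lintegral_indicator measurableSet_Ioi,
      layercake _ _ (((measurable_decRe _ _).min (measurable_decRe _ _)))]
    apply lintegral_congr
    intro t
    rw [Measure.restrict_apply' measurableSet_Ioi]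
    have hsec : {x : ℝ | ENNReal.ofReal t < min (FA x) (FB x)} ∩ Ioi 0
        = {s : ℝ | 0 < s ∧ ENNReal.ofReal s <
            min (volume {x | ENNReal.ofReal t < phiSec A x})
                (volume {x | ENNReal.ofReal t < phiSec B x})} := by
      ext s
      simp only [mem_inter_iff, mem_setOf_eq, mem_Ioi, lt_min_iff]
      rw [hFA, hFB, lt_decRe_iff volume (phiSec A) ENNReal.ofReal_ne_top,
        lt_decRe_iff volume (phiSec B) ENNReal.ofReal_ne_top]
      tauto
    rw [hsec, vol_setOf_lt]
  have lhs : volume (A ∩ B) ≤ ∫⁻ t in Set.Ioi (0:ℝ),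
      volume {x | ENNReal.ofReal t < min (phiSec A x) (phiSec B x)} := by
    rw [show (volume : Measure (ℝ × ℝ)) = (volume : Measure ℝ).prod volume from
      MeasureTheory.Measure.volume_eq_prod ℝ ℝ, Measure.prod_apply (hA.inter hB),
      ← layercake _ _ (hφA.min hφB)]
    apply lintegral_mono
    intro x
    refine le_min (measure_mono ?_) (measure_mono ?_) <;> intro y hy
    · exact hy.1
    · exact hy.2
  refine le_trans lhs ?_
  rw [rhs]
  apply lintegral_mono
  intro t
  refine le_min (measure_mono ?_) (measure_mono ?_) <;> intro x hx
  · exact lt_of_lt_of_le (Set.mem_setOf_eq ▸ hx) (min_le_left _ _)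
  · exact lt_of_lt_of_le (Set.mem_setOf_eq ▸ hx) (min_le_right _ _)

lemma meas_uncurry (g : MeasureTheory.SimpleFunc (ℝ × ℝ) ℝ) :
    Measurable (Function.uncurry fun (x : ℝ × ℝ) (t : ℝ) =>
      (starSet {p | t < g p}).indicator (fun _ => (1 : ℝ≥0∞)) x) := by
  classical
  set R : Finset ℝ := g.range with hR
  set T : Set ((ℝ × ℝ) × ℝ) :=
    ⋃ σ ∈ R.powerset, (starSet {p | g p ∈ σ}) ×ˢ {t : ℝ | ∀ v ∈ R, (t < v ↔ v ∈ σ)} with hT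
  have hTmeas : MeasurableSet T := by
    refine MeasurableSet.biUnion R.powerset.countable_toSet fun σ _ => ?_
    refine (measurableSet_starSet _).prod ?_
    have : {t : ℝ | ∀ v ∈ R, (t < v ↔ v ∈ σ)} = ⋂ v ∈ R, {t : ℝ | t < v ↔ v ∈ σ} := by
      ext t; simp
    rw [this]
    refine MeasurableSet.biInter R.countable_toSet fun v _ => ?_
    by_cases hv : v ∈ σ
    · simp only [hv, iff_true]
      exact measurableSet_Iio
    · simp only [hv, iff_false, not_lt]
      exact measurableSet_Ici
  have key : ∀ (x : ℝ × ℝ) (t : ℝ), ((x, t) ∈ T) ↔ x ∈ starSet {p | t < g p} := by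
    intro x t
    set σ₀ : Finset ℝ := R.filter (fun v => t < v) with hσ₀
    have hset : {p : ℝ × ℝ | g p ∈ σ₀} = {p | t < g p} := by
      ext p
      simp only [mem_setOf_eq, hσ₀, Finset.mem_filter]
      exact ⟨fun h => h.2, fun h => ⟨g.mem_range_self p, h⟩⟩
    constructor
    · rintro hx
      simp only [hT, mem_iUnion, Finset.mem_powerset] at hx
      obtain ⟨σ, hσsub, hxσ, htσ⟩ := hx
      have : σ = σ₀ := by
        ext v
        simp only [hσ₀, Finset.mem_filter]
        constructor
        · intro hv; exact ⟨hσsub hv, (htσ v (hσsub hv)).mpr hv⟩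
        · rintro ⟨hvR, hvt⟩; exact (htσ v hvR).mp hvt
      rw [this, hset] at hxσ
      exact hxσ
    · intro hx
      simp only [hT, mem_iUnion, Finset.mem_powerset]
      refine ⟨σ₀, Finset.filter_subset _ _, by rw [hset]; exact hx, fun v hv => ?_⟩
      simp [hσ₀, Finset.mem_filter, hv]
  have heq : (Function.uncurry fun (x : ℝ × ℝ) (t : ℝ) =>
      (starSet {p | t < g p}).indicator (fun _ => (1 : ℝ≥0∞)) x)
      = T.indicator (fun _ => (1 : ℝ≥0∞)) := by
    funext q
    simp only [Function.uncurry, Set.indicator_apply, key q.1 q.2]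
  rw [heq]
  exact Measurable.indicator measurable_const hTmeas

theorem stmt14 (g : MeasureTheory.SimpleFunc (ℝ × ℝ) ℝ) (hg : ∀ x, 0 ≤ g x)
    (E : Set (ℝ × ℝ)) (hE : MeasurableSet E) :
    ∫⁻ x in E, ENNReal.ofReal (g x) ≤ ∫⁻ x in starSet E, rearr2 (⇑g) x := by
  have hgm : Measurable (⇑g) := g.measurable
  have habs : ∀ t : ℝ, {p : ℝ × ℝ | t < |g p|} = {p | t < g p} := by
    intro t; ext p; simp [abs_of_nonneg (hg p)]
  have lhs_eq : ∫⁻ x in E, ENNReal.ofReal (g x)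
      = ∫⁻ t in Set.Ioi (0:ℝ), volume ({p | t < g p} ∩ E) := by
    rw [lintegral_eq_lintegral_meas_lt (volume.restrict E) (ae_of_all _ hg) hgm.aemeasurable]
    refine lintegral_congr fun t => ?_
    exact Measure.restrict_apply (measurableSet_lt measurable_const hgm)
  have rhs_eq : ∫⁻ x in starSet E, rearr2 (⇑g) x
      = ∫⁻ t in Set.Ioi (0:ℝ), volume (starSet {p | t < g p} ∩ starSet E) := by
    unfold rearr2
    simp_rw [habs]
    rw [lintegral_lintegral_swap ((meas_uncurry g).aemeasurable)]
    refine lintegral_congr fun t => ?_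
    rw [show (fun x => (starSet {p | t < g p}).indicator (fun _ => (1:ℝ≥0∞)) x)
      = (starSet {p | t < g p}).indicator (1 : ℝ × ℝ → ℝ≥0∞) from rfl,
      lintegral_indicator_one (measurableSet_starSet _),
      Measure.restrict_apply (measurableSet_starSet _)]
  rw [lhs_eq, rhs_eq]
  exact lintegral_mono fun t => setInt _ _ (measurableSet_lt measurable_const hgm) hE
end

section
/- If g and h are measurable functions on ℝ and f(x,y) = g(x)h(y), then f₂*(s,t) = g*(s)h*(t) for all s,t > 0. -/
open MeasureTheory Set ENNReal Filter

/-- Right-continuity (approximation from above) of the distribution function. -/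
lemma distrib_approx {α : Type*} [MeasurableSpace α] (μ : Measure α) (F : α → ℝ≥0∞)
    {b l : ℝ≥0∞} (hl : l < μ {x | b < F x}) :
    ∃ b', b < b' ∧ l < μ {x | b' < F x} := by
  have hb : b ≠ ∞ := by
    rintro rfl
    have : {x | (⊤ : ℝ≥0∞) < F x} = ∅ := by
      ext x; simp
    rw [this, measure_empty] at hl
    exact (ENNReal.not_lt_zero hl)
  have hmono : Monotone (fun n : ℕ => {x | b + ((n : ℝ≥0∞))⁻¹ < F x}) := by
    intro n m hnm x hx
    have : (m : ℝ≥0∞)⁻¹ ≤ (n : ℝ≥0∞)⁻¹ :=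
      ENNReal.inv_le_inv.mpr (by exact_mod_cast hnm)
    exact lt_of_le_of_lt (add_le_add_right this b) hx
  have hU : {x | b < F x} = ⋃ n : ℕ, {x | b + ((n : ℝ≥0∞))⁻¹ < F x} := by
    ext x
    simp only [mem_setOf_eq, mem_iUnion]
    constructor
    · intro hx
      rcases eq_or_ne (F x) ∞ with hF | hF
      · refine ⟨1, ?_⟩
        rw [hF]
        exact ENNReal.add_lt_top.mpr ⟨hb.lt_top, by simp⟩
      · obtain ⟨n, hn⟩ := ENNReal.exists_inv_nat_lt (tsub_pos_of_lt hx).ne'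
        refine ⟨n, ?_⟩
        calc b + (n : ℝ≥0∞)⁻¹ < b + (F x - b) := ENNReal.add_lt_add_left hb hn
          _ = F x := add_tsub_cancel_of_le hx.le
    · rintro ⟨n, hn⟩
      exact lt_of_le_of_lt le_self_add hn
  rw [hU, hmono.measure_iUnion] at hl
  obtain ⟨n, hn⟩ := lt_iSup_iff.mp hl
  exact ⟨b + ((n : ℝ≥0∞))⁻¹,
    ENNReal.lt_add_right hb (ENNReal.inv_ne_zero.mpr (ENNReal.natCast_ne_top n)), hn⟩

/-- The distribution function evaluated at the rearrangement is small. -/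
lemma distrib_decRe_le {α : Type*} [MeasurableSpace α] (μ : Measure α) (F : α → ℝ≥0∞)
    (t : ℝ) : μ {x | decRe μ F t < F x} ≤ ENNReal.ofReal t := by
  by_contra hcon
  push_neg at hcon
  obtain ⟨b', hb', hl⟩ := distrib_approx μ F hcon
  rw [decRe] at hb'
  obtain ⟨l, hlS, hlb⟩ := sInf_lt_iff.mp hb'
  have hsub : {x | b' < F x} ⊆ {x | l < F x} := fun x hx => lt_trans hlb hx
  exact absurd (le_trans (measure_mono hsub) hlS) hl.not_ge

/-- Inversion: `t < d_F(u)` iff `u < F*(t)`. -/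
lemma lt_distrib_iff {α : Type*} [MeasurableSpace α] (μ : Measure α) (F : α → ℝ≥0∞)
    (t : ℝ) (u : ℝ≥0∞) :
    ENNReal.ofReal t < μ {x | u < F x} ↔ u < decRe μ F t := by
  constructor
  · intro hlt
    by_contra hle
    push_neg at hle
    have hsub : {x | u < F x} ⊆ {x | decRe μ F t < F x} :=
      fun x hx => lt_of_le_of_lt hle hx
    exact absurd (le_trans (measure_mono hsub) (distrib_decRe_le μ F t)) hlt.not_ge
  · intro hu
    by_contra hle
    push_neg at hle
    have : decRe μ F t ≤ u := by
      rw [decRe]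
      exact sInf_le hle
    exact absurd this hu.not_ge

/-- Composition: the rearrangement of `x ↦ ν {y | c / G x < H y}` is obtained by
plugging in the rearrangement of `G`. -/
lemma decRe_comp {α β : Type*} [MeasurableSpace α] [MeasurableSpace β]
    (μ : Measure α) (ν : Measure β) (G : α → ℝ≥0∞) (H : β → ℝ≥0∞)
    {c : ℝ≥0∞} (hc0 : c ≠ 0) (hct : c ≠ ∞) (s : ℝ) :
    decRe μ (fun x => ν {y | c / G x < H y}) s
      = ν {y | c / decRe μ G s < H y} := by
  set A := decRe μ G s with hA
  apply le_antisymm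
  · apply sInf_le
    show μ {x | ν {y | c / A < H y} < ν {y | c / G x < H y}} ≤ ENNReal.ofReal s
    refine le_trans (measure_mono ?_) (distrib_decRe_le μ G s)
    intro x hx
    simp only [mem_setOf_eq] at hx ⊢
    by_contra hAx
    push_neg at hAx
    have hsub : {y | c / G x < H y} ⊆ {y | c / A < H y} := by
      intro y hy
      exact lt_of_le_of_lt (ENNReal.div_le_div_left hAx c) hy
    exact absurd (measure_mono hsub) hx.not_ge
  · apply le_sInf
    intro l hl
    by_contra hlt
    push_neg at hlt
    rcases eq_or_ne A 0 with hA0 | hA0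
    · rw [hA0, ENNReal.div_zero hc0] at hlt
      have : {y | (⊤ : ℝ≥0∞) < H y} = ∅ := by
        ext y; simp
      rw [this, measure_empty] at hlt
      exact ENNReal.not_lt_zero hlt
    · obtain ⟨b', hb', hlb'⟩ := distrib_approx ν H hlt
      have hb'0 : b' ≠ 0 := by
        intro h
        rw [h] at hb'
        exact (not_lt_bot hb')
      have hab : c / (c / b') = b' := by
        rw [div_eq_mul_inv c (c / b'), ENNReal.inv_div (Or.inr hct) (Or.inr hc0),
          ENNReal.mul_div_cancel hc0 hct]
      have haA : c / b' < A := by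
        have h1 : c < b' * A := (ENNReal.div_lt_iff (Or.inr hc0) (Or.inr hct)).mp hb'
        exact (ENNReal.div_lt_iff (Or.inr hc0) (Or.inr hct)).mpr (by rwa [mul_comm] at h1)
      have hmem : μ {x | c / b' < G x} ≤ ENNReal.ofReal s := by
        refine le_trans (measure_mono ?_) hl
        intro x hx
        simp only [mem_setOf_eq] at hx ⊢
        have hsub : {y | b' < H y} ⊆ {y | c / G x < H y} := by
          intro y hy
          have : c / G x ≤ c / (c / b') := ENNReal.div_le_div_left hx.le c
          rw [hab] at this
          exact lt_of_le_of_lt this hy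
        exact lt_of_lt_of_le hlb' (measure_mono hsub)
      have : A ≤ c / b' := by
        rw [hA, decRe]
        exact sInf_le hmem
      exact absurd this haA.not_ge

theorem stmt17 (g h : ℝ → ℝ) (hg : Measurable g) (hh : Measurable h) :
    ∀ s t : ℝ, 0 < s → 0 < t →
      rearr2 (fun p => g p.1 * h p.2) (s, t)
        = decRe volume (fun x => ENNReal.ofReal |g x|) s *
            decRe volume (fun y => ENNReal.ofReal |h y|) t := by
  intro s t hs ht
  set G : ℝ → ℝ≥0∞ := fun x => ENNReal.ofReal |g x| with hG
  set H : ℝ → ℝ≥0∞ := fun y => ENNReal.ofReal |h y| with hH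
  set A := decRe volume G s with hA
  set B := decRe volume H t with hB
  have key : ∀ t' ∈ Ioi (0 : ℝ),
      (starSet {p : ℝ × ℝ | t' < |g p.1 * h p.2|}).indicator (fun _ => (1 : ℝ≥0∞)) (s, t)
        = ({u : ℝ | ENNReal.ofReal u < A * B}).indicator (fun _ => (1 : ℝ≥0∞)) t' := by
    intro t' ht'
    rw [mem_Ioi] at ht'
    have hc0 : ENNReal.ofReal t' ≠ 0 := (ENNReal.ofReal_pos.mpr ht').ne'
    have hct : ENNReal.ofReal t' ≠ ∞ := ENNReal.ofReal_ne_top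
    have hphi : phiSec {p : ℝ × ℝ | t' < |g p.1 * h p.2|}
        = fun x => volume {y | ENNReal.ofReal t' / G x < H y} := by
      funext x
      rw [phiSec]
      congr 1
      ext y
      simp only [mem_setOf_eq]
      rw [abs_mul, ← ENNReal.ofReal_lt_ofReal_iff_of_nonneg ht'.le,
        ENNReal.ofReal_mul (abs_nonneg _)]
      show ENNReal.ofReal t' < G x * H y ↔ ENNReal.ofReal t' / G x < H y
      rw [ENNReal.div_lt_iff (Or.inr hc0) (Or.inr hct), mul_comm]
    have hiff : (s, t) ∈ starSet {p : ℝ × ℝ | t' < |g p.1 * h p.2|}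
        ↔ ENNReal.ofReal t' < A * B := by
      rw [starSet]
      simp only [mem_setOf_eq]
      rw [hphi, decRe_comp volume volume G H hc0 hct s, ← hA,
        lt_distrib_iff volume H t (ENNReal.ofReal t' / A), ← hB,
        ENNReal.div_lt_iff (Or.inr hc0) (Or.inr hct), mul_comm B A]
      simp [hs, ht]
    by_cases hm : ENNReal.ofReal t' < A * B
    · rw [Set.indicator_of_mem (hiff.mpr hm),
        Set.indicator_of_mem (show t' ∈ {u : ℝ | ENNReal.ofReal u < A * B} from hm)]
    · rw [Set.indicator_of_notMem (fun hmem => hm (hiff.mp hmem)),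
        Set.indicator_of_notMem (show t' ∉ {u : ℝ | ENNReal.ofReal u < A * B} from hm)]
  have hre : rearr2 (fun p => g p.1 * h p.2) (s, t)
      = ∫⁻ t' in Ioi (0 : ℝ),
          ({u : ℝ | ENNReal.ofReal u < A * B}).indicator (fun _ => (1 : ℝ≥0∞)) t' := by
    rw [rearr2]
    exact setLIntegral_congr_fun measurableSet_Ioi key
  have hD : MeasurableSet {u : ℝ | ENNReal.ofReal u < A * B} := by
    have : {u : ℝ | ENNReal.ofReal u < A * B} = ENNReal.ofReal ⁻¹' (Iio (A * B)) := rfl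
    rw [this]
    exact ENNReal.measurable_ofReal measurableSet_Iio
  rw [hre, lintegral_indicator hD, setLIntegral_one, Measure.restrict_apply hD]
  rcases eq_or_ne (A * B) ∞ with hP | hP
  · have : {u : ℝ | ENNReal.ofReal u < A * B} ∩ Ioi 0 = Ioi (0 : ℝ) := by
      rw [hP]
      ext u
      simp [ENNReal.ofReal_lt_top]
    rw [this, Real.volume_Ioi, hP]
  · have : {u : ℝ | ENNReal.ofReal u < A * B} ∩ Ioi 0 = Ioo 0 ((A * B).toReal) := by
      ext u
      simp only [mem_inter_iff, mem_setOf_eq, mem_Ioi, mem_Ioo]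
      constructor
      · rintro ⟨h1, h2⟩
        exact ⟨h2, (ENNReal.ofReal_lt_iff_lt_toReal h2.le hP).mp h1⟩
      · rintro ⟨h1, h2⟩
        exact ⟨(ENNReal.ofReal_lt_iff_lt_toReal h1.le hP).mpr h2, h1⟩
    rw [this, Real.volume_Ioo, sub_zero, ENNReal.ofReal_toReal hP]
end
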